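/- Let ψ solve μ ∂ₓψ + σ_T ψ = σ_r φ on [x_L, x_R] with ψ(x_L)=0, where μ > 0 and σ_T, σ_r are continuous with 0 < σ_r ≤ σ_T. Then the weighted L² norm of ψ with weight σ_T is at most that of φ: ∫ σ_T |ψ|² dx ≤ ∫ σ_T |φ|² dx. -/

import Mathlib

open MeasureTheory intervalIntegral Real

/-- For `μ > 0`, the transport solution
`ψ(x) = (1/μ) ∫_{x_L}^x exp(-(1/μ)∫_y^x σ_T) σ_r(y) φ(y) dy`
(which solves `μ ψ' + σ_T ψ = σ_r φ`, `ψ(x_L) = 0`) satisfies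
`∫ σ_T ψ² ≤ ∫ σ_T φ²` on `[x_L, x_R]`. -/
theorem stmt0 (xL xR : ℝ) (hx : xL < xR) (μ : ℝ) (hμ : 0 < μ)
    (σT σr φ : ℝ → ℝ)
    (hσT : ContinuousOn σT (Set.Icc xL xR))
    (hσr : ContinuousOn σr (Set.Icc xL xR))
    (hφ : ContinuousOn φ (Set.Icc xL xR))
    (hpos : ∀ x ∈ Set.Icc xL xR, 0 < σr x)
    (hle : ∀ x ∈ Set.Icc xL xR, σr x ≤ σT x)
    (ψ : ℝ → ℝ)
    (hψ : ∀ x ∈ Set.Icc xL xR,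
      ψ x = (1 / μ) * ∫ y in xL..x,
        Real.exp (-(1 / μ) * ∫ z in y..x, σT z) * (σr y * φ y)) :
    (∫ x in xL..xR, σT x * (ψ x) ^ 2) ≤ ∫ x in xL..xR, σT x * (φ x) ^ 2 := by
  have hμ' : μ ≠ 0 := hμ.ne'
  set T : ℝ → ℝ := Set.IccExtend hx.le ((Set.Icc xL xR).restrict σT) with hTdef
  set r : ℝ → ℝ := Set.IccExtend hx.le ((Set.Icc xL xR).restrict σr) with hrdef
  set f : ℝ → ℝ := Set.IccExtend hx.le ((Set.Icc xL xR).restrict φ) with hfdef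
  have hTc : Continuous T := hσT.restrict.Icc_extend'
  have hrc : Continuous r := hσr.restrict.Icc_extend'
  have hfc : Continuous f := hφ.restrict.Icc_extend'
  have hTeq : ∀ x ∈ Set.Icc xL xR, T x = σT x :=
    fun x hx' => Set.IccExtend_of_mem _ _ hx'
  have hreq : ∀ x ∈ Set.Icc xL xR, r x = σr x :=
    fun x hx' => Set.IccExtend_of_mem _ _ hx'
  have hfeq : ∀ x ∈ Set.Icc xL xR, f x = φ x :=
    fun x hx' => Set.IccExtend_of_mem _ _ hx'
  set S : ℝ → ℝ := fun x => ∫ z in xL..x, T z with hSdef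
  have hS : ∀ x, HasDerivAt S (T x) x := fun x =>
    intervalIntegral.integral_hasDerivAt_right (hTc.intervalIntegrable _ _)
      (hTc.stronglyMeasurableAtFilter _ _) hTc.continuousAt
  set E : ℝ → ℝ := fun x => Real.exp (-(1 / μ) * S x) with hEdef
  have hEpos : ∀ x, 0 < E x := fun x => Real.exp_pos _
  have hE : ∀ x, HasDerivAt E (-(1 / μ) * T x * E x) x := by
    intro x
    have h := (HasDerivAt.const_mul (-(1 / μ)) (hS x)).exp
    convert h using 1
    ring
  have hSc : Continuous S := continuous_iff_continuousAt.mpr fun x => (hS x).continuousAt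
  have hEc : Continuous E := Real.continuous_exp.comp (continuous_const.mul hSc)
  have hintc : Continuous (fun y => r y * f y / E y) :=
    (hrc.mul hfc).div hEc (fun y => (hEpos y).ne')
  set g : ℝ → ℝ := fun x => (1 / μ) * ∫ y in xL..x, r y * f y / E y with hgdef
  have hg : ∀ x, HasDerivAt g ((1 / μ) * (r x * f x / E x)) x := fun x =>
    HasDerivAt.const_mul (1 / μ)
      (intervalIntegral.integral_hasDerivAt_right (hintc.intervalIntegrable _ _)
        (hintc.stronglyMeasurableAtFilter _ _) hintc.continuousAt)
  set Ψ : ℝ → ℝ := fun x => E x * g x with hΨdef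
  have hΨ' : ∀ x, HasDerivAt Ψ ((1 / μ) * (r x * f x - T x * Ψ x)) x := by
    intro x
    have h := (hE x).mul (hg x)
    refine h.congr_deriv ?_
    have hEne : E x ≠ 0 := (hEpos x).ne'
    have hEE : E x * (r x * f x / E x) = r x * f x := by field_simp
    have hP : Ψ x = E x * g x := rfl
    linear_combination (1 / μ) * hEE + (1 / μ * T x) * hP
  have hΨc : Continuous Ψ := continuous_iff_continuousAt.mpr fun x => (hΨ' x).continuousAt
  -- ψ = Ψ on the interval
  have hψΨ : ∀ x ∈ Set.Icc xL xR, ψ x = Ψ x := by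
    intro x hxI
    rw [hψ x hxI]
    have hEqOn : ∀ y ∈ Set.uIcc xL x,
        Real.exp (-(1 / μ) * ∫ z in y..x, σT z) * (σr y * φ y)
          = E x * (r y * f y / E y) := by
      intro y hy
      rw [Set.uIcc_of_le hxI.1] at hy
      have hyI : y ∈ Set.Icc xL xR := ⟨hy.1, hy.2.trans hxI.2⟩
      have hTcongr : (∫ z in y..x, σT z) = ∫ z in y..x, T z := by
        apply intervalIntegral.integral_congr
        intro z hz
        rw [Set.uIcc_of_le hy.2] at hz
        exact (hTeq z ⟨hy.1.trans hz.1, hz.2.trans hxI.2⟩).symm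
      have hSsplit : (∫ z in y..x, T z) = S x - S y :=
        (intervalIntegral.integral_interval_sub_left (hTc.intervalIntegrable _ _)
          (hTc.intervalIntegrable _ _)).symm
      rw [hTcongr, hSsplit, ← hreq y hyI, ← hfeq y hyI,
        show -(1 / μ) * (S x - S y) = -(1 / μ) * S x - -(1 / μ) * S y by ring,
        Real.exp_sub]
      have hEne : E y ≠ 0 := (hEpos y).ne'
      rw [hEdef]
      field_simp
    rw [intervalIntegral.integral_congr hEqOn, intervalIntegral.integral_const_mul]
    simp only [hΨdef, hgdef]
    ring
  -- energy functional
  have hcont2 : Continuous (fun t => T t * Ψ t ^ 2 - r t * f t * Ψ t) :=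
    (hTc.mul (hΨc.pow 2)).sub ((hrc.mul hfc).mul hΨc)
  set G : ℝ → ℝ := fun x => μ / 2 * Ψ x ^ 2
      + ∫ t in xL..x, (T t * Ψ t ^ 2 - r t * f t * Ψ t) with hGdef
  have hG : ∀ x, HasDerivAt G 0 x := by
    intro x
    have h1 := HasDerivAt.const_mul (μ / 2) ((hΨ' x).pow 2)
    have h2 : HasDerivAt (fun u => ∫ t in xL..u, (T t * Ψ t ^ 2 - r t * f t * Ψ t))
        (T x * Ψ x ^ 2 - r x * f x * Ψ x) x :=
      intervalIntegral.integral_hasDerivAt_right (hcont2.intervalIntegrable _ _)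
        (hcont2.stronglyMeasurableAtFilter _ _) hcont2.continuousAt
    have h := h1.add h2
    refine h.congr_deriv ?_
    have hm : μ / 2 * 2 * (1 / μ) = 1 := by field_simp
    linear_combination (Ψ x * (r x * f x - T x * Ψ x)) * hm
  have hGc : G xR = G xL :=
    is_const_of_deriv_eq_zero (fun x => (hG x).differentiableAt) (fun x => (hG x).deriv) xR xL
  have hΨxL : Ψ xL = 0 := by simp [hΨdef, hgdef]
  have hGxL : G xL = 0 := by simp [hGdef, hΨxL]
  have hsub : (∫ t in xL..xR, (T t * Ψ t ^ 2 - r t * f t * Ψ t))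
      = (∫ t in xL..xR, T t * Ψ t ^ 2) - ∫ t in xL..xR, r t * f t * Ψ t :=
    intervalIntegral.integral_sub ((hTc.mul (hΨc.pow 2)).intervalIntegrable _ _)
      (((hrc.mul hfc).mul hΨc).intervalIntegrable _ _)
  have hΨR : 0 ≤ μ / 2 * Ψ xR ^ 2 := by positivity
  have step1 : (∫ t in xL..xR, T t * Ψ t ^ 2) ≤ ∫ t in xL..xR, r t * f t * Ψ t := by
    have := hGc
    rw [hGxL, hGdef] at this
    simp only at this
    rw [hsub] at this
    linarith
  have step2 : (∫ t in xL..xR, r t * f t * Ψ t)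
      ≤ ∫ t in xL..xR, (T t * f t ^ 2 / 2 + T t * Ψ t ^ 2 / 2) := by
    apply intervalIntegral.integral_mono_on hx.le
      (((hrc.mul hfc).mul hΨc).intervalIntegrable _ _)
      (((hTc.mul (hfc.pow 2)).div_const 2).add
        ((hTc.mul (hΨc.pow 2)).div_const 2) |>.intervalIntegrable _ _)
    intro t ht
    have hr0 : 0 < r t := by rw [hreq t ht]; exact hpos t ht
    have hrT : r t ≤ T t := by rw [hreq t ht, hTeq t ht]; exact hle t ht
    show r t * f t * Ψ t ≤ T t * f t ^ 2 / 2 + T t * Ψ t ^ 2 / 2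
    nlinarith [mul_nonneg (sub_nonneg.2 hrT) (add_nonneg (sq_nonneg (f t)) (sq_nonneg (Ψ t))),
      mul_nonneg hr0.le (sq_nonneg (f t - Ψ t))]
  have hadd : (∫ t in xL..xR, (T t * f t ^ 2 / 2 + T t * Ψ t ^ 2 / 2))
      = (∫ t in xL..xR, T t * f t ^ 2) / 2 + (∫ t in xL..xR, T t * Ψ t ^ 2) / 2 := by
    rw [intervalIntegral.integral_add (f := fun t => T t * f t ^ 2 / 2)
      (g := fun t => T t * Ψ t ^ 2 / 2) (((hTc.mul (hfc.pow 2)).div_const 2).intervalIntegrable _ _)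
      (((hTc.mul (hΨc.pow 2)).div_const 2).intervalIntegrable _ _),
      intervalIntegral.integral_div, intervalIntegral.integral_div]
  have key : (∫ t in xL..xR, T t * Ψ t ^ 2) ≤ ∫ t in xL..xR, T t * f t ^ 2 := by
    rw [hadd] at step2
    linarith
  have congr1 : (∫ x in xL..xR, σT x * ψ x ^ 2) = ∫ t in xL..xR, T t * Ψ t ^ 2 := by
    apply intervalIntegral.integral_congr
    intro t ht
    rw [Set.uIcc_of_le hx.le] at ht
    show σT t * ψ t ^ 2 = T t * Ψ t ^ 2
    rw [hTeq t ht, hψΨ t ht]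
  have congr2 : (∫ x in xL..xR, σT x * φ x ^ 2) = ∫ t in xL..xR, T t * f t ^ 2 := by
    apply intervalIntegral.integral_congr
    intro t ht
    rw [Set.uIcc_of_le hx.le] at ht
    show σT t * φ t ^ 2 = T t * f t ^ 2
    rw [hTeq t ht, hfeq t ht]
  rw [congr1, congr2]
  exact key
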